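/- arXiv:cs/0504083 — 2 statements merged into one kernel-verified Lean document; each statement's English description precedes it below -/
import Mathlib

section
/- For the binary-Hamming stegosystem, the hiding capacity satisfies C(D) = max over channels q(x|x̃) with E[d_H(X̃,X)] ≤ D of H(X | X̃) = H(min(D, 1/2)) when the cover X̃ is Bernoulli(1/2); i.e., C(D) = H(D) for 0 ≤ D ≤ 1/2 and C(D) = 1 for D > 1/2. -/
open Real Finset

/-- Binary entropy function (base 2). -/
noncomputable def binH (x : ℝ) : ℝ :=
  -(x * Real.logb 2 x) - (1 - x) * Real.logb 2 (1 - x)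

/-- Hamming distance on bits. -/
def dH (a b : Bool) : ℝ := if a = b then 0 else 1

lemma binH_eq (x : ℝ) : binH x = Real.binEntropy x / Real.log 2 := by
  have h2 : (0:ℝ) < Real.log 2 := Real.log_pos (by norm_num)
  rcases eq_or_ne x 0 with rfl | hx0
  · simp [binH]
  rcases eq_or_ne x 1 with rfl | hx1
  · simp [binH]
  have hx0' : x⁻¹ ≠ 0 := inv_ne_zero hx0
  unfold binH Real.binEntropy Real.logb
  rw [Real.log_inv, Real.log_inv]
  field_simp
  ring

/-- Hiding capacity of the binary-Hamming stegosystem with a Bernoulli(1/2) cover: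
the maximum of `H(X | X̃)` over channels `q(x|xt)` with expected Hamming distortion
at most `D` equals `H(min(D, 1/2))`, i.e. `H(D)` for `0 ≤ D ≤ 1/2` and `1` for `D > 1/2`. -/
theorem binary_hamming_hiding_capacity (D : ℝ) (hD : 0 ≤ D) :
    IsGreatest
      {h : ℝ | ∃ q : Bool → Bool → ℝ,
        (∀ xt x, 0 ≤ q xt x) ∧ (∀ xt, ∑ x, q xt x = 1) ∧
        (∑ xt, ∑ x, dH xt x * q xt x * (1 / 2)) ≤ D ∧
        h = ∑ xt, (1 / 2 : ℝ) * ∑ x, -(q xt x * Real.logb 2 (q xt x))}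
      (binH (min D (1 / 2))) ∧
    (D ≤ 1 / 2 → binH (min D (1 / 2)) = binH D) ∧
    (1 / 2 < D → binH (min D (1 / 2)) = 1) := by
  have h2 : (0:ℝ) < Real.log 2 := Real.log_pos (by norm_num)
  set d := min D (1/2) with hd
  have hd0 : 0 ≤ d := le_min hD (by norm_num)
  have hd1 : d ≤ 1/2 := min_le_right _ _
  -- row entropy lemma: for p ∈ [0,1], the row with flip prob p has entropy binH p
  have row : ∀ p : ℝ, -((1 - p) * Real.logb 2 (1 - p)) + -(p * Real.logb 2 p) = binH p := by
    intro p; unfold binH; ring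
  refine ⟨⟨⟨fun xt x => if x = xt then 1 - d else d, ?_, ?_, ?_, ?_⟩, ?_⟩, ?_, ?_⟩
  · intro xt x
    by_cases h : x = xt <;> simp [h] <;> linarith
  · intro xt
    rcases xt <;> simp [Fintype.sum_bool]
  · simp [Fintype.sum_bool, dH]
    linarith [min_le_left D (1/2)]
  · simp [Fintype.sum_bool, dH]
    ring_nf
    unfold binH
    ring
  · -- upper bound: each member ≤ binH d
    rintro h ⟨q, hq0, hq1, hqd, rfl⟩
    set pt := q true false
    set pf := q false true
    have htt : q true true = 1 - pt := by
      have := hq1 true; simp [Fintype.sum_bool] at this; linarith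
    have hff : q false false = 1 - pf := by
      have := hq1 false; simp [Fintype.sum_bool] at this; linarith
    have hpt0 : 0 ≤ pt := hq0 true false
    have hpf0 : 0 ≤ pf := hq0 false true
    have hpt1 : pt ≤ 1 := by have := hq0 true true; rw [htt] at this; linarith
    have hpf1 : pf ≤ 1 := by have := hq0 false false; rw [hff] at this; linarith
    have hdist : (pt + pf) / 2 ≤ D := by
      simp [Fintype.sum_bool, dH] at hqd
      linarith
    have hsum : ∑ xt, (1 / 2 : ℝ) * ∑ x, -(q xt x * Real.logb 2 (q xt x))
        = (1/2) * binH pt + (1/2) * binH pf := by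
      simp [Fintype.sum_bool, htt, hff]
      rw [show ∀ a b : ℝ, -(a) + -(b) = -(a+b) from fun a b => by ring] at *
      unfold binH; ring
    rw [hsum]
    set m := (pt + pf) / 2 with hm
    have hm0 : 0 ≤ m := by positivity
    have hm1 : m ≤ 1 := by rw [hm]; linarith
    have hconc : (1/2) * Real.binEntropy pt + (1/2) * Real.binEntropy pf
        ≤ Real.binEntropy m := by
      have := Real.strictConcave_binEntropy.concaveOn.2
        (Set.mem_Icc.2 ⟨hpt0, hpt1⟩) (Set.mem_Icc.2 ⟨hpf0, hpf1⟩)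
        (by norm_num : (0:ℝ) ≤ 1/2) (by norm_num : (0:ℝ) ≤ 1/2) (by norm_num)
      have hmeq : (1/2 : ℝ) • pt + (1/2 : ℝ) • pf = m := by
        rw [hm]; simp [smul_eq_mul]; ring
      rw [hmeq] at this
      simpa [smul_eq_mul] using this
    have hmono : Real.binEntropy m ≤ Real.binEntropy d := by
      rcases le_or_gt m (1/2) with hmle | hmgt
      · have hmd : m ≤ d := le_min hdist hmle
        exact Real.binEntropy_strictMonoOn.monotoneOn
          (Set.mem_Icc.2 ⟨hm0, by norm_num; linarith⟩)
          (Set.mem_Icc.2 ⟨hd0, by norm_num; linarith⟩) hmd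
      · have hDgt : 1/2 < D := lt_of_lt_of_le hmgt hdist
        have : d = 1/2 := min_eq_right (le_of_lt hDgt)
        rw [this]
        have : Real.binEntropy (1/2 : ℝ) = Real.log 2 := by
          rw [show (1/2 : ℝ) = 2⁻¹ by norm_num]; exact Real.binEntropy_two_inv
        rw [this]
        exact Real.binEntropy_le_log_two
    rw [binH_eq, binH_eq, binH_eq]
    calc (1/2) * (Real.binEntropy pt / Real.log 2) + (1/2) * (Real.binEntropy pf / Real.log 2)
        = ((1/2) * Real.binEntropy pt + (1/2) * Real.binEntropy pf) / Real.log 2 := by ring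
      _ ≤ Real.binEntropy m / Real.log 2 := by gcongr
      _ ≤ Real.binEntropy d / Real.log 2 := by gcongr
  · intro hle; rw [hd, min_eq_left hle]
  · intro hlt
    rw [hd, min_eq_right (le_of_lt hlt), binH_eq]
    rw [show (1/2 : ℝ) = 2⁻¹ by norm_num, Real.binEntropy_two_inv]
    field_simp
end

section
/- Fix p₀ > p₁ in (0,1), w_f, w_m > 0, and set Δp = p₀ − p₁. Define n = ⌈((w_m √(p₀(1−p₀)) + w_f √(p₁(1−p₁))) / Δp)²⌉ and T = w_f √(n p₁(1−p₁)) + n p₁. Then T ≤ n p₀ − w_m √(n p₀(1−p₀)); i.e., the threshold T lies at least w_m standard deviations below the mean n p₀ and at least w_f standard deviations above the mean n p₁. -/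
open Real

/-- The sample-size and threshold formulas of the correlation attack: with
`n = ⌈((w_m √(p₀(1−p₀)) + w_f √(p₁(1−p₁)))/Δp)²⌉` and
`T = w_f √(n p₁(1−p₁)) + n p₁`, the threshold lies at least `w_m` standard
deviations below the mean `n p₀` (and, by construction, `w_f` standard deviations
above the mean `n p₁`). -/
theorem correlation_attack_threshold
    (p₀ p₁ w_f w_m : ℝ) (hp₁0 : 0 < p₁) (hp₀1 : p₀ < 1) (hlt : p₁ < p₀)
    (hwf : 0 < w_f) (hwm : 0 < w_m)
    (n : ℕ)
    (hn : n = ⌈((w_m * Real.sqrt (p₀ * (1 - p₀)) + w_f * Real.sqrt (p₁ * (1 - p₁))) /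
        (p₀ - p₁)) ^ 2⌉₊)
    (T : ℝ)
    (hT : T = w_f * Real.sqrt ((n : ℝ) * p₁ * (1 - p₁)) + (n : ℝ) * p₁) :
    T ≤ (n : ℝ) * p₀ - w_m * Real.sqrt ((n : ℝ) * p₀ * (1 - p₀)) := by
  have hΔ : 0 < p₀ - p₁ := sub_pos.mpr hlt
  obtain ⟨s₀, s₁, c, hs₀, hs₁, hc⟩ :
      ∃ s₀ s₁ c : ℝ, s₀ = Real.sqrt (p₀ * (1 - p₀)) ∧ s₁ = Real.sqrt (p₁ * (1 - p₁)) ∧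
        c = (w_m * s₀ + w_f * s₁) / (p₀ - p₁) := ⟨_, _, _, rfl, rfl, rfl⟩
  have hcn : c ^ 2 ≤ (n : ℝ) := by
    have h := Nat.le_ceil (((w_m * Real.sqrt (p₀ * (1 - p₀)) +
        w_f * Real.sqrt (p₁ * (1 - p₁))) / (p₀ - p₁)) ^ 2)
    rw [← hn] at h
    rw [hc, hs₀, hs₁]
    exact h
  have hsqrt : c ≤ Real.sqrt n := by
    calc c ≤ |c| := le_abs_self c
    _ = Real.sqrt (c ^ 2) := (Real.sqrt_sq_eq_abs c).symm
    _ ≤ Real.sqrt n := Real.sqrt_le_sqrt hcn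
  have hkey : w_m * s₀ + w_f * s₁ ≤ Real.sqrt n * (p₀ - p₁) := by
    have h := mul_le_mul_of_nonneg_right hsqrt hΔ.le
    rwa [hc, div_mul_cancel₀ _ hΔ.ne'] at h
  have hnn : (0:ℝ) ≤ (n:ℝ) := Nat.cast_nonneg n
  have h0 : Real.sqrt ((n : ℝ) * p₀ * (1 - p₀)) = Real.sqrt n * s₀ := by
    rw [hs₀, mul_assoc, Real.sqrt_mul hnn]
  have h1 : Real.sqrt ((n : ℝ) * p₁ * (1 - p₁)) = Real.sqrt n * s₁ := by
    rw [hs₁, mul_assoc, Real.sqrt_mul hnn]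
  have hmain : w_m * (Real.sqrt n * s₀) + w_f * (Real.sqrt n * s₁) ≤ (n : ℝ) * (p₀ - p₁) := by
    calc w_m * (Real.sqrt n * s₀) + w_f * (Real.sqrt n * s₁)
        = Real.sqrt n * (w_m * s₀ + w_f * s₁) := by ring
      _ ≤ Real.sqrt n * (Real.sqrt n * (p₀ - p₁)) :=
          mul_le_mul_of_nonneg_left hkey (Real.sqrt_nonneg _)
      _ = (Real.sqrt n * Real.sqrt n) * (p₀ - p₁) := by ring
      _ = (n : ℝ) * (p₀ - p₁) := by rw [Real.mul_self_sqrt hnn]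
  rw [hT, h0, h1]
  nlinarith [hmain]
end
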